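/- Let |ψ⟩ be a unit vector in a tensor product of N finite-dimensional spaces, and let G = Σ_{l=0}^{N−1} G'_l where G'_l acts on sites l+1,…,l+k (cyclically) with ⟨ψ|G'_l|ψ⟩ = 0 and ‖G'_l‖ ≤ 1. Assume exponential decay of correlations: |⟨ψ|A₁A₂|ψ⟩ − ⟨ψ|A₁|ψ⟩⟨ψ|A₂|ψ⟩| ≤ ‖A₁‖‖A₂‖·K·e^{−dist(A₁,A₂)/ξ} for all operators A₁, A₂ with disjoint supports. Then ⟨ψ|G²|ψ⟩ ≤ C·N for a constant C depending only on K, ξ, k. -/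

import Mathlib

open scoped InnerProductSpace

/-- Cyclic distance on `{0,…,N−1}`. -/
def Dpair (N l₁ l₂ : ℕ) : ℕ :=
  min (max l₁ l₂ - min l₁ l₂) (N - (max l₁ l₂ - min l₁ l₂))

private lemma card4 (a b c d : ℕ) : ({a, b, c, d} : Finset ℕ).card ≤ 4 := by
  have h1 := Finset.card_insert_le a ({b, c, d} : Finset ℕ)
  have h2 := Finset.card_insert_le b ({c, d} : Finset ℕ)
  have h3 := Finset.card_insert_le c ({d} : Finset ℕ)
  simp only [Finset.card_singleton] at h3
  omega

private lemma fiber_card (N l₁ d : ℕ) (hl₁ : l₁ < N) :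
    ((Finset.range N).filter (fun l₂ => Dpair N l₁ l₂ = d)).card ≤ 4 := by
  have hsub : (Finset.range N).filter (fun l₂ => Dpair N l₁ l₂ = d) ⊆
      ({l₁ + d, l₁ - d, l₁ + (N - d), l₁ - (N - d)} : Finset ℕ) := by
    intro l₂ hl₂
    rw [Finset.mem_filter, Finset.mem_range] at hl₂
    simp only [Finset.mem_filter, Finset.mem_range, Dpair] at hl₂
    simp only [Finset.mem_insert, Finset.mem_singleton]
    omega
  exact (Finset.card_le_card hsub).trans (card4 _ _ _ _)

private lemma sum_f_le (K ξ : ℝ) (k M : ℕ) (hK : 0 ≤ K) (hξ : 0 < ξ) (hk : 1 ≤ k) :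
    ∑ d ∈ Finset.range M,
        (if k - 1 < d then K * Real.exp (-((d - (k - 1) : ℕ) : ℝ) / ξ) else 1)
      ≤ k + K / (1 - Real.exp (-1 / ξ)) := by
  set r := Real.exp (-1 / ξ) with hr
  have hr0 : 0 < r := Real.exp_pos _
  have hr1 : r < 1 := Real.exp_lt_one_iff.mpr (by
    apply div_neg_of_neg_of_pos <;> [norm_num; exact hξ])
  have hsub : 0 < 1 - r := by linarith
  have key : ∀ n : ℕ, Real.exp (-(n : ℝ) / ξ) = r ^ n := by
    intro n
    rw [hr, ← Real.exp_nat_mul]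
    congr 1
    ring
  rw [← Finset.sum_filter_add_sum_filter_not (Finset.range M) (fun d => k - 1 < d)]
  have h1 : ∑ d ∈ (Finset.range M).filter (fun d => ¬ k - 1 < d),
      (if k - 1 < d then K * Real.exp (-((d - (k - 1) : ℕ) : ℝ) / ξ) else 1) ≤ (k : ℝ) := by
    rw [Finset.sum_congr rfl (fun d hd => if_neg (Finset.mem_filter.mp hd).2)]
    rw [Finset.sum_const, nsmul_eq_mul, mul_one]
    have hss : (Finset.range M).filter (fun d => ¬ k - 1 < d) ⊆ Finset.range k := by
      intro d hd
      simp only [Finset.mem_filter, Finset.mem_range] at hd ⊢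
      omega
    exact_mod_cast Nat.cast_le.mpr ((Finset.card_le_card hss).trans (by simp))
  have h2 : ∑ d ∈ (Finset.range M).filter (fun d => k - 1 < d),
      (if k - 1 < d then K * Real.exp (-((d - (k - 1) : ℕ) : ℝ) / ξ) else 1)
      ≤ K / (1 - r) := by
    have hIco : (Finset.range M).filter (fun d => k - 1 < d) = Finset.Ico k M := by
      ext d
      simp only [Finset.mem_filter, Finset.mem_range, Finset.mem_Ico]
      omega
    rw [hIco, Finset.sum_Ico_eq_sum_range]
    have hterm : ∀ i,
        (if k - 1 < k + i then K * Real.exp (-(((k + i) - (k - 1) : ℕ) : ℝ) / ξ) else 1)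
          = (K * r) * r ^ i := by
      intro i
      rw [if_pos (by omega)]
      have he : (k + i) - (k - 1) = i + 1 := by omega
      rw [he, key, pow_succ]
      ring
    rw [Finset.sum_congr rfl (fun i _ => hterm i), ← Finset.mul_sum]
    have hgeom : ∑ i ∈ Finset.range (M - k), r ^ i ≤ 1 / (1 - r) := by
      rw [geom_sum_eq hr1.ne]
      have heq : (r ^ (M - k) - 1) / (r - 1) = (1 - r ^ (M - k)) / (1 - r) := by
        rw [div_eq_div_iff (by linarith) (by linarith)]
        ring
      rw [heq]
      have hp : 0 ≤ r ^ (M - k) := le_of_lt (pow_pos hr0 _)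
      gcongr
      linarith
    calc (K * r) * ∑ i ∈ Finset.range (M - k), r ^ i
        ≤ (K * r) * (1 / (1 - r)) := by
          apply mul_le_mul_of_nonneg_left hgeom (by positivity)
      _ ≤ K * (1 / (1 - r)) := by
          apply mul_le_mul_of_nonneg_right _ (by positivity)
          nlinarith
      _ = K / (1 - r) := by ring
  linarith

private lemma row_bound (K ξ : ℝ) (k N l₁ : ℕ) (hK : 0 ≤ K) (hξ : 0 < ξ) (hk : 1 ≤ k)
    (hl₁ : l₁ < N) :
    ∑ l₂ ∈ Finset.range N,
        (if k - 1 < Dpair N l₁ l₂ then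
            K * Real.exp (-((Dpair N l₁ l₂ - (k - 1) : ℕ) : ℝ) / ξ) else 1)
      ≤ 4 * (k + K / (1 - Real.exp (-1 / ξ))) := by
  set f : ℕ → ℝ := fun d =>
    if k - 1 < d then K * Real.exp (-((d - (k - 1) : ℕ) : ℝ) / ξ) else 1 with hf
  have hf0 : ∀ d, 0 ≤ f d := by
    intro d
    rw [hf]
    dsimp only
    split
    · positivity
    · norm_num
  calc ∑ l₂ ∈ Finset.range N, f (Dpair N l₁ l₂)
      = ∑ b ∈ (Finset.range N).image (fun l₂ => Dpair N l₁ l₂),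
          ((Finset.range N).filter (fun l₂ => Dpair N l₁ l₂ = b)).card • f b :=
        Finset.sum_comp f (fun l₂ => Dpair N l₁ l₂)
    _ ≤ ∑ b ∈ (Finset.range N).image (fun l₂ => Dpair N l₁ l₂), 4 * f b := by
        apply Finset.sum_le_sum
        intro b _
        rw [nsmul_eq_mul]
        exact mul_le_mul_of_nonneg_right
          (by exact_mod_cast Nat.cast_le.mpr (fiber_card N l₁ b hl₁)) (hf0 b)
    _ ≤ ∑ b ∈ Finset.range (N + 1), 4 * f b := by
        apply Finset.sum_le_sum_of_subset_of_nonneg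
        · intro b hb
          simp only [Finset.mem_image, Finset.mem_range] at hb ⊢
          obtain ⟨l₂, _, rfl⟩ := hb
          simp only [Dpair]
          omega
        · intro b _ _
          exact mul_nonneg (by norm_num) (hf0 b)
    _ = 4 * ∑ b ∈ Finset.range (N + 1), f b := (Finset.mul_sum _ _ _).symm
    _ ≤ 4 * (k + K / (1 - Real.exp (-1 / ξ))) := by
        have := sum_f_le K ξ k (N + 1) hK hξ hk
        linarith

theorem stmt16 (K ξ : ℝ) (k : ℕ) (hK : 0 ≤ K) (hξ : 0 < ξ) (hk : 1 ≤ k) :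
    ∃ C : ℝ, 0 ≤ C ∧
      ∀ (N : ℕ) (ι : Type) (_ : Fintype ι) (_ : DecidableEq ι)
        (ψ : EuclideanSpace ℂ ι)
        (G : ℕ → EuclideanSpace ℂ ι →L[ℂ] EuclideanSpace ℂ ι),
        1 ≤ N → ‖ψ‖ = 1 →
        (∀ l ∈ Finset.range N, ‖G l‖ ≤ 1) →
        (∀ l ∈ Finset.range N, ⟪ψ, G l ψ⟫_ℂ = 0) →
        -- exponential decay of correlations between terms with disjoint supports:
        -- `G l₁` is supported on sites `l₁+1,…,l₁+k` (cyclically), so the supports of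
        -- `G l₁` and `G l₂` are disjoint, at cyclic distance `Dpair N l₁ l₂ − (k−1)`,
        -- whenever `k − 1 < Dpair N l₁ l₂`
        (∀ l₁ ∈ Finset.range N, ∀ l₂ ∈ Finset.range N, k - 1 < Dpair N l₁ l₂ →
          ‖⟪ψ, (G l₁) ((G l₂) ψ)⟫_ℂ - ⟪ψ, (G l₁) ψ⟫_ℂ * ⟪ψ, (G l₂) ψ⟫_ℂ‖
            ≤ K * Real.exp (-((Dpair N l₁ l₂ - (k - 1) : ℕ) : ℝ) / ξ)) →
        (⟪ψ, (∑ l ∈ Finset.range N, G l) ((∑ l ∈ Finset.range N, G l) ψ)⟫_ℂ).re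
          ≤ C * N := by
  have hr1 : Real.exp (-1 / ξ) < 1 := Real.exp_lt_one_iff.mpr
    (div_neg_of_neg_of_pos (by norm_num) hξ)
  have hdiv : 0 ≤ K / (1 - Real.exp (-1 / ξ)) := div_nonneg hK (by linarith)
  refine ⟨4 * (k + K / (1 - Real.exp (-1 / ξ))), ?_, ?_⟩
  · have : (0 : ℝ) ≤ k := Nat.cast_nonneg k
    linarith
  intro N ι _ _ ψ G hN hψ hnorm hzero hdecay
  have expand : ⟪ψ, (∑ l ∈ Finset.range N, G l) ((∑ l ∈ Finset.range N, G l) ψ)⟫_ℂ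
      = ∑ l₁ ∈ Finset.range N, ∑ l₂ ∈ Finset.range N, ⟪ψ, (G l₁) ((G l₂) ψ)⟫_ℂ := by
    rw [ContinuousLinearMap.sum_apply, inner_sum]
    refine Finset.sum_congr rfl fun l₁ _ => ?_
    rw [ContinuousLinearMap.sum_apply, map_sum, inner_sum]
  rw [expand]
  simp only [Complex.re_sum]
  have hterm : ∀ l₁ ∈ Finset.range N, ∀ l₂ ∈ Finset.range N,
      (⟪ψ, (G l₁) ((G l₂) ψ)⟫_ℂ).re ≤
        (if k - 1 < Dpair N l₁ l₂ then
            K * Real.exp (-((Dpair N l₁ l₂ - (k - 1) : ℕ) : ℝ) / ξ) else 1) := by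
    intro l₁ hl₁ l₂ hl₂
    refine (Complex.re_le_norm _).trans ?_
    split
    · rename_i hd
      have h := hdecay l₁ hl₁ l₂ hl₂ hd
      rw [hzero l₁ hl₁, hzero l₂ hl₂] at h
      simpa using h
    · have h1 : ‖⟪ψ, (G l₁) ((G l₂) ψ)⟫_ℂ‖ ≤ ‖ψ‖ * ‖(G l₁) ((G l₂) ψ)‖ := by
        exact norm_inner_le_norm (𝕜 := ℂ) ψ _
      have h2 : ‖(G l₁) ((G l₂) ψ)‖ ≤ ‖G l₁‖ * ‖(G l₂) ψ‖ := (G l₁).le_opNorm _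
      have h3 : ‖(G l₂) ψ‖ ≤ ‖G l₂‖ * ‖ψ‖ := (G l₂).le_opNorm _
      have h4 := hnorm l₁ hl₁
      have h5 := hnorm l₂ hl₂
      have h6 : (0 : ℝ) ≤ ‖G l₁‖ := norm_nonneg _
      have h7 : (0 : ℝ) ≤ ‖(G l₂) ψ‖ := norm_nonneg _
      have h8 : (0 : ℝ) ≤ ‖G l₂‖ := norm_nonneg _
      rw [hψ] at h1 h3
      nlinarith
  calc ∑ l₁ ∈ Finset.range N, ∑ l₂ ∈ Finset.range N, (⟪ψ, (G l₁) ((G l₂) ψ)⟫_ℂ).re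
      ≤ ∑ l₁ ∈ Finset.range N, ∑ l₂ ∈ Finset.range N,
          (if k - 1 < Dpair N l₁ l₂ then
              K * Real.exp (-((Dpair N l₁ l₂ - (k - 1) : ℕ) : ℝ) / ξ) else 1) := by
        apply Finset.sum_le_sum
        intro l₁ hl₁
        exact Finset.sum_le_sum (hterm l₁ hl₁)
    _ ≤ ∑ l₁ ∈ Finset.range N, (4 * (k + K / (1 - Real.exp (-1 / ξ)))) := by
        apply Finset.sum_le_sum
        intro l₁ hl₁
        exact row_bound K ξ k N l₁ hK hξ hk (Finset.mem_range.mp hl₁)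
    _ = 4 * (k + K / (1 - Real.exp (-1 / ξ))) * N := by
        rw [Finset.sum_const, nsmul_eq_mul, Finset.card_range, mul_comm]
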